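/- Let p ≥ 2 be an even integer. Then for all real numbers a and b, p (a^{p−1} − b^{p−1})(a − b) ≥ 2 (a^{p/2} − b^{p/2})². -/

import Mathlib

open Finset in
/-- Core inequality for nonnegative `a, b`, via geometric sum factorization and
Cauchy–Schwarz. -/
lemma fp_aux_nonneg (k : ℕ) (a b : ℝ) (ha : 0 ≤ a) (hb : 0 ≤ b) :
    ((k : ℝ) + 1) * ((a ^ (2 * k + 1) - b ^ (2 * k + 1)) * (a - b)) ≥
      (a ^ (k + 1) - b ^ (k + 1)) ^ 2 := by
  have hS := geom_sum₂_mul a b (2 * k + 1)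
  have hT := geom_sum₂_mul a b (k + 1)
  set S : ℝ := ∑ i ∈ range (2 * k + 1), a ^ i * b ^ (2 * k + 1 - 1 - i) with hSdef
  set T : ℝ := ∑ i ∈ range (k + 1), a ^ i * b ^ (k + 1 - 1 - i) with hTdef
  have hCS : T ^ 2 ≤ ((k : ℝ) + 1) * ∑ i ∈ range (k + 1), (a ^ i * b ^ (k + 1 - 1 - i)) ^ 2 := by
    have := sq_sum_le_card_mul_sum_sq (s := range (k + 1))
      (f := fun i => a ^ i * b ^ (k + 1 - 1 - i))
    simpa [Finset.card_range, hTdef] using this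
  have hsub : ∑ i ∈ range (k + 1), (a ^ i * b ^ (k + 1 - 1 - i)) ^ 2 ≤ S := by
    have himg : ∑ i ∈ range (k + 1), (a ^ i * b ^ (k + 1 - 1 - i)) ^ 2
        = ∑ j ∈ (range (k + 1)).image (fun i => 2 * i), a ^ j * b ^ (2 * k + 1 - 1 - j) := by
      rw [Finset.sum_image (by intro x _ y _ h; simp only at h; omega)]
      refine Finset.sum_congr rfl ?_
      intro i hi
      simp only [Finset.mem_range] at hi
      have h1 : k + 1 - 1 - i = k - i := by omega
      have h2 : 2 * k + 1 - 1 - 2 * i = 2 * (k - i) := by omega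
      rw [h1, h2, mul_pow, ← pow_mul, ← pow_mul]
      ring_nf
    rw [himg]
    apply Finset.sum_le_sum_of_subset_of_nonneg
    · intro j hj
      simp only [Finset.mem_image, Finset.mem_range] at hj ⊢
      omega
    · intro j _ _
      exact mul_nonneg (pow_nonneg ha _) (pow_nonneg hb _)
  have hkey : T ^ 2 ≤ ((k : ℝ) + 1) * S := by
    refine hCS.trans ?_
    have : (0:ℝ) ≤ (k:ℝ) + 1 := by positivity
    nlinarith [hsub]
  rw [← hS, ← hT]
  nlinarith [hkey, sq_nonneg (a - b), sq_nonneg T]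

/-- The "plus" version for nonnegative `x, y`, used for the mixed-sign case. -/
lemma fp_aux_plus (k : ℕ) (x y : ℝ) (hx : 0 ≤ x) (hy : 0 ≤ y) :
    ((k : ℝ) + 1) * ((x ^ (2 * k + 1) + y ^ (2 * k + 1)) * (x + y)) ≥
      (x ^ (k + 1) + y ^ (k + 1)) ^ 2 := by
  have h1 : x ^ (2 * k + 1) = (x ^ k) ^ 2 * x := by ring
  have h2 : y ^ (2 * k + 1) = (y ^ k) ^ 2 * y := by ring
  have h3 : x ^ (k + 1) = x ^ k * x := by ring
  have h4 : y ^ (k + 1) = y ^ k * y := by ring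
  rw [h1, h2, h3, h4]
  have hX : 0 ≤ x ^ k := pow_nonneg hx k
  have hY : 0 ≤ y ^ k := pow_nonneg hy k
  have hk : (0:ℝ) ≤ (k:ℝ) := Nat.cast_nonneg k
  nlinarith [mul_nonneg (mul_nonneg hx hy) (sq_nonneg (x ^ k - y ^ k)),
    mul_nonneg hk (mul_nonneg (mul_nonneg hX hX) (mul_nonneg hx hx)),
    mul_nonneg hk (mul_nonneg (mul_nonneg hY hY) (mul_nonneg hy hy)),
    mul_nonneg hk (mul_nonneg (mul_nonneg hX hX) (mul_nonneg hx hy)),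
    mul_nonneg hk (mul_nonneg (mul_nonneg hY hY) (mul_nonneg hx hy)),
    sq_nonneg (x ^ k * x - y ^ k * y)]

/-- Mixed-sign case `0 ≤ a`, `b ≤ 0`. -/
lemma fp_aux_mixed (k : ℕ) (a b : ℝ) (ha : 0 ≤ a) (hb : b ≤ 0) :
    ((k : ℝ) + 1) * ((a ^ (2 * k + 1) - b ^ (2 * k + 1)) * (a - b)) ≥
      (a ^ (k + 1) - b ^ (k + 1)) ^ 2 := by
  obtain ⟨c, hc0, rfl⟩ : ∃ c, 0 ≤ c ∧ b = -c := ⟨-b, by linarith, by ring⟩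
  have key := fp_aux_plus k a c ha hc0
  have hodd : (-c) ^ (2 * k + 1) = -c ^ (2 * k + 1) := Odd.neg_pow ⟨k, by ring⟩ c
  rw [hodd]
  rcases Nat.even_or_odd (k + 1) with he | ho
  · rw [he.neg_pow]
    nlinarith [mul_nonneg (pow_nonneg ha (k + 1)) (pow_nonneg hc0 (k + 1))]
  · rw [ho.neg_pow]
    nlinarith [key]

/-- Core inequality for all real `a, b`. -/
lemma fp_aux (k : ℕ) (a b : ℝ) :
    ((k : ℝ) + 1) * ((a ^ (2 * k + 1) - b ^ (2 * k + 1)) * (a - b)) ≥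
      (a ^ (k + 1) - b ^ (k + 1)) ^ 2 := by
  rcases le_total 0 a with ha | ha <;> rcases le_total 0 b with hb | hb
  · exact fp_aux_nonneg k a b ha hb
  · exact fp_aux_mixed k a b ha hb
  · have := fp_aux_mixed k b a hb (by linarith)
    nlinarith [this]
  · have := fp_aux_nonneg k (-a) (-b) (by linarith) (by linarith)
    have h1 : (-a) ^ (2 * k + 1) = -a ^ (2 * k + 1) := Odd.neg_pow ⟨k, by ring⟩ a
    have h2 : (-b) ^ (2 * k + 1) = -b ^ (2 * k + 1) := Odd.neg_pow ⟨k, by ring⟩ b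
    rw [h1, h2] at this
    rcases Nat.even_or_odd (k + 1) with he | ho
    · rw [he.neg_pow, he.neg_pow] at this
      nlinarith [this]
    · rw [ho.neg_pow, ho.neg_pow] at this
      nlinarith [this]

/-- For every even integer `p ≥ 2` and all real `a, b`,
`p (a^{p-1} - b^{p-1})(a - b) ≥ 2 (a^{p/2} - b^{p/2})²`. -/
theorem fp_nonneg (p : ℕ) (hp : 2 ≤ p) (hpeven : Even p) (a b : ℝ) :
    (p : ℝ) * (a ^ (p - 1) - b ^ (p - 1)) * (a - b) ≥ 2 * (a ^ (p / 2) - b ^ (p / 2)) ^ 2 := by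
  obtain ⟨m, hm⟩ := hpeven
  have hm1 : 1 ≤ m := by omega
  obtain ⟨k, rfl⟩ : ∃ k, m = k + 1 := ⟨m - 1, by omega⟩
  have h1 : p - 1 = 2 * k + 1 := by omega
  have h2 : p / 2 = k + 1 := by omega
  have h3 : (p : ℝ) = 2 * ((k : ℝ) + 1) := by
    rw [hm]; push_cast; ring
  rw [h1, h2, h3]
  have := fp_aux k a b
  nlinarith [this]
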